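/- Let (Ω, 𝓕, ℙ) be a probability space and (V_1,ε_1),…,(V_K,ε_K) be i.i.d. pairs with V_k : Ω → ℝ^d and ε_k : Ω → ℝ, K ≥ 1. Let C₁ > 0 and R ≥ 0, suppose Σ := E[V_1 V_1ᵀ] is positive definite with V_1ᵀ Σ^{-1} V_1 ≤ C₁ d almost surely, |ε_1| ≤ R almost surely, and the conditional expectation of ε_1 given the σ-algebra generated by V_1 vanishes almost surely. Then for every δ ∈ (0,1), with probability at least 1 − δ, ‖Σ^{-1/2} (1/K) ∑_{k=1}^K ε_k V_k‖ ≤ √d · R · ( √(2 log(8d/δ)/K) + 2 √(C₁ d) log(8d/δ)/K + (2 C₁ d / 3) (log(8d/δ))^{3/2} / K^{3/2} ), where ‖·‖ on ℝ^d is the Euclidean norm. -/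

import Mathlib

open Matrix MeasureTheory ProbabilityTheory

open Classical in
/-- The positive semidefinite square root of a positive semidefinite real matrix
(junk value `0` on matrices that are not positive semidefinite). -/
noncomputable def msqrt {d : ℕ} (A : Matrix (Fin d) (Fin d) ℝ) : Matrix (Fin d) (Fin d) ℝ :=
  if h : A.PosSemidef then
    (h.1.eigenvectorUnitary : Matrix (Fin d) (Fin d) ℝ) *
      diagonal (Real.sqrt ∘ h.1.eigenvalues) *
      (star h.1.eigenvectorUnitary : Matrix (Fin d) (Fin d) ℝ) else 0

/-- The Euclidean norm of a vector in `Fin d → ℝ`. -/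
noncomputable def euclNorm {d : ℕ} (v : Fin d → ℝ) : ℝ :=
  Real.sqrt (∑ i, v i ^ 2)

section Aux

lemma hd1 (x : ℝ) : HasDerivAt (fun y : ℝ => 1 + y + y^2/2 - Real.exp y) (1 + x - Real.exp x) x := by
  have h1 : HasDerivAt (fun y : ℝ => 1 + y) 1 x := by simpa using (hasDerivAt_id x).const_add 1
  have h2 : HasDerivAt (fun y : ℝ => y^2/2) x x := by
    have := (hasDerivAt_pow 2 x).div_const 2
    simpa [mul_comm] using this
  exact (h1.add h2).sub (Real.hasDerivAt_exp x)

lemma exp_le_quad_neg {y : ℝ} (hy : y ≤ 0) : Real.exp y ≤ 1 + y + y^2/2 := by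
  have hmono : AntitoneOn (fun y : ℝ => 1 + y + y^2/2 - Real.exp y) (Set.Iic 0) := by
    apply antitoneOn_of_deriv_nonpos (convex_Iic 0)
    · fun_prop
    · intro x hx
      exact (hd1 x).differentiableAt.differentiableWithinAt
    · intro x hx
      rw [(hd1 x).deriv]
      have := Real.add_one_le_exp x
      linarith
  have := hmono (Set.mem_Iic.2 hy) (Set.mem_Iic.2 le_rfl) hy
  simp only [ne_eq, OfNat.ofNat_ne_zero, not_false_eq_true, zero_pow, zero_div, add_zero,
    Real.exp_zero] at this
  linarith [this]

-- phi: 2 + y - (2-y) e^y monotone, phi(0)=0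
lemma hd2 (x : ℝ) : HasDerivAt (fun y : ℝ => 2 + y - (2 - y) * Real.exp y)
    (1 + (x - 1) * Real.exp x) x := by
  have h1 : HasDerivAt (fun y : ℝ => 2 + y) 1 x := by simpa using (hasDerivAt_id x).const_add 2
  have h2 : HasDerivAt (fun y : ℝ => (2 - y) * Real.exp y)
      ((-1) * Real.exp x + (2 - x) * Real.exp x) x := by
    exact (((hasDerivAt_id x).const_sub 2)).mul (Real.hasDerivAt_exp x)
  have := h1.sub h2
  exact this.congr_deriv (by ring)

lemma aux_phi {y : ℝ} (hy : 0 ≤ y) : (2 - y) * Real.exp y ≤ 2 + y := by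
  have hmono : Monotone (fun y : ℝ => 2 + y - (2 - y) * Real.exp y) := by
    apply monotone_of_deriv_nonneg
    · intro x; exact (hd2 x).differentiableAt
    · intro x
      rw [(hd2 x).deriv]
      have h := Real.add_one_le_exp (-x)
      have hx : (1 - x) * Real.exp x ≤ 1 := by
        have := mul_le_mul_of_nonneg_right h (Real.exp_pos x).le
        rwa [← Real.exp_add, neg_add_cancel, Real.exp_zero, neg_add_eq_sub] at this
      nlinarith [Real.exp_pos x]
  have := hmono hy
  simp only [Real.exp_zero] at this
  linarith [this]

lemma hd3 (x : ℝ) : HasDerivAt (fun y : ℝ => 3 + 2*y + y^2/2 - (3 - y) * Real.exp y)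
    (2 + x - (2 - x) * Real.exp x) x := by
  have h1 : HasDerivAt (fun y : ℝ => 3 + 2*y) 2 x := by
    simpa using ((hasDerivAt_id x).const_mul 2).const_add 3
  have h2 : HasDerivAt (fun y : ℝ => y^2/2) x x := by
    have := (hasDerivAt_pow 2 x).div_const 2
    simpa [mul_comm] using this
  have h3 : HasDerivAt (fun y : ℝ => (3 - y) * Real.exp y)
      ((-1) * Real.exp x + (3 - x) * Real.exp x) x :=
    (((hasDerivAt_id x).const_sub 3)).mul (Real.hasDerivAt_exp x)
  have := (h1.add h2).sub h3
  exact this.congr_deriv (by ring)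

lemma aux_psi {y : ℝ} (hy : 0 ≤ y) : (3 - y) * Real.exp y ≤ 3 + 2*y + y^2/2 := by
  have hmono : MonotoneOn (fun y : ℝ => 3 + 2*y + y^2/2 - (3 - y) * Real.exp y) (Set.Ici 0) := by
    apply monotoneOn_of_deriv_nonneg (convex_Ici 0)
    · fun_prop
    · intro x hx
      exact (hd3 x).differentiableAt.differentiableWithinAt
    · intro x hx
      rw [(hd3 x).deriv]
      rw [interior_Ici] at hx
      linarith [aux_phi (le_of_lt hx)]
  have := hmono (Set.mem_Ici.2 le_rfl) (Set.mem_Ici.2 hy) hy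
  simp only [ne_eq, OfNat.ofNat_ne_zero, not_false_eq_true, zero_pow, zero_div,
    Real.exp_zero] at this
  nlinarith [this]

lemma exp_le_quad {y c : ℝ} (hc : 0 ≤ c) (hc3 : c < 3) (hy : y ≤ c) :
    Real.exp y ≤ 1 + y + 3 / (2*(3 - c)) * y^2 := by
  have h3c : 0 < 3 - c := by linarith
  rcases le_or_gt y 0 with h0 | h0
  · have := exp_le_quad_neg h0
    have hq : 1/2 ≤ 3 / (2*(3-c)) := by
      rw [div_le_div_iff₀ (by norm_num) (by positivity)]
      nlinarith
    nlinarith [sq_nonneg y]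
  · have hψ := aux_psi h0.le
    have h3y : 0 < 3 - y := by linarith
    have h1 : Real.exp y ≤ 1 + y + 3/2 * y^2 / (3 - y) := by
      rw [← sub_nonneg]
      have key : (1 + y + 3/2*y^2/(3-y) - Real.exp y) * (3 - y) = 3 + 2*y + y^2/2 - (3-y)*Real.exp y := by
        field_simp
        ring
      nlinarith [key]
    have h2 : 3/2 * y^2 / (3 - y) ≤ 3 / (2*(3 - c)) * y^2 := by
      have h2' : 3/2 * y^2 / (3 - y) ≤ 3/2 * y^2 / (3 - c) := by
        gcongr
      have h2'' : 3/2 * y^2 / (3 - c) = 3 / (2*(3 - c)) * y^2 := by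
        field_simp
      linarith
    linarith


lemma integrable_of_ae_bound {Ω : Type*} [MeasurableSpace Ω] {μ : Measure Ω} [IsFiniteMeasure μ]
    {f : Ω → ℝ} {c : ℝ} (hf : AEStronglyMeasurable f μ) (h : ∀ᵐ ω ∂μ, |f ω| ≤ c) :
    Integrable f μ :=
  (integrable_const c).mono' hf (by simpa [Real.norm_eq_abs] using h)

lemma mgf_le_of_bound {Ω : Type*} [MeasurableSpace Ω] {μ : Measure Ω} [IsProbabilityMeasure μ]
    {X : Ω → ℝ} (hX : Measurable X) {b v lam : ℝ} (hb : 0 < b)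
    (hbd : ∀ᵐ ω ∂μ, |X ω| ≤ b) (hmean : ∫ ω, X ω ∂μ = 0)
    (hvar : ∫ ω, (X ω)^2 ∂μ ≤ v) (hlam : 0 ≤ lam) (hlamb : lam * b < 3) :
    mgf X μ lam ≤ Real.exp (3 / (2*(3 - lam*b)) * lam^2 * v) := by
  have h3 : 0 < 3 - lam*b := by linarith
  set q : ℝ := 3 / (2*(3 - lam*b)) with hq
  have hq0 : 0 ≤ q := by positivity
  have hXint : Integrable X μ := integrable_of_ae_bound hX.aestronglyMeasurable hbd
  have hX2int : Integrable (fun ω => (X ω)^2) μ := by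
    refine integrable_of_ae_bound (c := b^2) (hX.pow_const 2).aestronglyMeasurable ?_
    filter_upwards [hbd] with ω hω
    rw [abs_pow]
    exact pow_le_pow_left₀ (abs_nonneg _) hω 2
  have hexpint : Integrable (fun ω => Real.exp (lam * X ω)) μ := by
    refine integrable_of_ae_bound (c := Real.exp (lam * b)) ((hX.const_mul lam).exp).aestronglyMeasurable ?_
    filter_upwards [hbd] with ω hω
    rw [abs_of_pos (Real.exp_pos _), Real.exp_le_exp]
    exact mul_le_mul_of_nonneg_left (le_trans (le_abs_self _) hω) hlam
  have hv0 : 0 ≤ v := le_trans (integral_nonneg fun ω => sq_nonneg _) hvar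
  have hpt : ∀ᵐ ω ∂μ, Real.exp (lam * X ω) ≤ 1 + lam * X ω + (q*lam^2) * (X ω)^2 := by
    filter_upwards [hbd] with ω hω
    have hy : lam * X ω ≤ lam * b :=
      mul_le_mul_of_nonneg_left (le_trans (le_abs_self _) hω) hlam
    have := exp_le_quad (by positivity) hlamb hy
    have heq : q * (lam * X ω)^2 = q*lam^2*(X ω)^2 := by ring
    rw [← hq] at this
    linarith [this, heq]
  have hsum1 : Integrable (fun ω => 1 + lam * X ω) μ := by
    exact (integrable_const 1).add (hXint.const_mul lam)
  have hRHSint : Integrable (fun ω => 1 + lam * X ω + (q*lam^2) * (X ω)^2) μ := by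
    exact hsum1.add (hX2int.const_mul (q*lam^2))
  have hint : mgf X μ lam ≤ ∫ ω, (1 + lam * X ω + (q*lam^2) * (X ω)^2) ∂μ := by
    rw [mgf]
    exact integral_mono_ae hexpint hRHSint hpt
  have hval : ∫ ω, (1 + lam * X ω + (q*lam^2) * (X ω)^2) ∂μ
      = 1 + lam * (∫ ω, X ω ∂μ) + (q*lam^2) * ∫ ω, (X ω)^2 ∂μ := by
    rw [integral_add hsum1 (hX2int.const_mul (q*lam^2)),
      integral_add (integrable_const 1) (hXint.const_mul lam),
      integral_const, integral_const_mul, integral_const_mul]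
    simp
  rw [hval, hmean] at hint
  have : 1 + lam * 0 + (q*lam^2) * ∫ ω, (X ω)^2 ∂μ ≤ 1 + q*lam^2*v := by
    have := mul_le_mul_of_nonneg_left hvar (by positivity : 0 ≤ q*lam^2)
    linarith
  calc mgf X μ lam ≤ 1 + q*lam^2*v := le_trans hint this
    _ ≤ Real.exp (q*lam^2*v) := by linarith [Real.add_one_le_exp (q*lam^2*v)]




lemma bernstein_tail {Ω : Type*} [MeasurableSpace Ω] (μ : Measure Ω) [IsProbabilityMeasure μ]
    {K : ℕ} (hK : 0 < K) (X : Fin K → Ω → ℝ) (hmeas : ∀ k, Measurable (X k))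
    (hindep : iIndepFun X μ)
    {b R L : ℝ} (hb : 0 < b) (hR : 0 < R) (hL : 0 < L)
    (hbd : ∀ k, ∀ᵐ ω ∂μ, |X k ω| ≤ b)
    (hmean : ∀ k, ∫ ω, X k ω ∂μ = 0)
    (hvar : ∀ k, ∫ ω, (X k ω)^2 ∂μ ≤ R^2) :
    (μ {ω | Real.sqrt (2*L*K)*R + 2/3*b*L ≤ ∑ k, X k ω}).toReal ≤ Real.exp (-L) := by
  set s : ℝ := Real.sqrt (2*L*K)*R with hs
  have hs0 : 0 ≤ s := by positivity
  have hs2 : s^2 = 2*L*K*R^2 := by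
    rw [hs, mul_pow, Real.sq_sqrt (by positivity)]
  set t : ℝ := s + 2/3*b*L with ht
  have ht0 : 0 < t := by positivity
  set D : ℝ := K*R^2 + b*t/3 with hD
  have hKR : (0:ℝ) < K*R^2 := by positivity
  have hD0 : 0 < D := by positivity
  set lam : ℝ := t/D with hlam
  have hlam0 : 0 ≤ lam := by positivity
  have hlamb : lam * b < 3 := by
    rw [hlam, div_mul_eq_mul_div, div_lt_iff₀ hD0]
    rw [hD]; nlinarith
  -- Chernoff
  have hSint : Integrable (fun ω => Real.exp (lam * (∑ k, X k ω))) μ := by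
    refine integrable_of_ae_bound (c := Real.exp (lam * (K*b)))
      ((((Finset.measurable_sum Finset.univ (fun k _ => hmeas k)).const_mul lam)).exp).aestronglyMeasurable ?_
    have hbd' : ∀ᵐ ω ∂μ, ∀ k, |X k ω| ≤ b := ae_all_iff.2 hbd
    filter_upwards [hbd'] with ω hω
    rw [abs_of_pos (Real.exp_pos _), Real.exp_le_exp]
    refine mul_le_mul_of_nonneg_left ?_ hlam0
    calc ∑ k, X k ω ≤ ∑ k : Fin K, b := by
          refine Finset.sum_le_sum fun k _ => le_trans (le_abs_self _) (hω k)
      _ = K*b := by simp [mul_comm]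
  have hchern := measure_ge_le_exp_mul_mgf (μ := μ) (X := fun ω => ∑ k, X k ω) t hlam0 hSint
  have hmgfsum : mgf (fun ω => ∑ k, X k ω) μ lam = ∏ k, mgf (X k) μ lam := by
    have := hindep.mgf_sum (t := lam) hmeas Finset.univ
    convert this using 2
    ext ω
    simp
  have hq : 3 - lam*b = 3*(K*R^2)/D := by
    rw [hlam, hD]; field_simp; ring
  have hmgfk : ∀ k, mgf (X k) μ lam ≤ Real.exp (3 / (2*(3 - lam*b)) * lam^2 * R^2) := fun k =>
    mgf_le_of_bound (hmeas k) hb (hbd k) (hmean k) (hvar k) hlam0 hlamb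
  have hprod : ∏ k : Fin K, mgf (X k) μ lam ≤ Real.exp (K * (3 / (2*(3 - lam*b)) * lam^2 * R^2)) := by
    calc ∏ k : Fin K, mgf (X k) μ lam
        ≤ ∏ _k : Fin K, Real.exp (3 / (2*(3 - lam*b)) * lam^2 * R^2) :=
          Finset.prod_le_prod (fun k _ => mgf_nonneg) (fun k _ => hmgfk k)
      _ = Real.exp (K * (3 / (2*(3 - lam*b)) * lam^2 * R^2)) := by
          rw [Finset.prod_const, ← Real.exp_nat_mul]
          simp
  have hexpo : -lam * t + K * (3 / (2*(3 - lam*b)) * lam^2 * R^2) ≤ -L := by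
    have h2 : 3 / (2*(3 - lam*b)) = D / (2*(K*R^2)) := by
      rw [hq]; field_simp
    rw [h2, hlam]
    have key : -(t/D) * t + K * (D/(2*(K*R^2)) * (t/D)^2 * R^2) = -(t^2/(2*D)) := by
      field_simp
      ring
    rw [key, neg_le_neg_iff ]
    rw [le_div_iff₀ (by positivity)]
    -- L * (2*D) ≤ t^2
    have ht2 : t^2 = s^2 + 4/3*s*b*L + 4/9*b^2*L^2 := by rw [ht]; ring
    rw [hD]; nlinarith [mul_nonneg (mul_nonneg hs0 hb.le) hL.le]
  calc (μ {ω | t ≤ ∑ k, X k ω}).toReal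
      ≤ Real.exp (-lam * t) * mgf (fun ω => ∑ k, X k ω) μ lam := hchern
    _ = Real.exp (-lam * t) * ∏ k, mgf (X k) μ lam := by rw [hmgfsum]
    _ ≤ Real.exp (-lam * t) * Real.exp (K * (3 / (2*(3 - lam*b)) * lam^2 * R^2)) := by
        exact mul_le_mul_of_nonneg_left hprod (Real.exp_pos _).le
    _ = Real.exp (-lam * t + K * (3 / (2*(3 - lam*b)) * lam^2 * R^2)) := by rw [← Real.exp_add]
    _ ≤ Real.exp (-L) := Real.exp_le_exp.2 hexpo




lemma identDistrib_ae_mem {Ω E : Type*} [MeasurableSpace Ω] [MeasurableSpace E] {μ : Measure Ω}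
    {f g : Ω → E} (h : IdentDistrib f g μ μ) {s : Set E} (hs : MeasurableSet s)
    (hg : ∀ᵐ ω ∂μ, g ω ∈ s) : ∀ᵐ ω ∂μ, f ω ∈ s := by
  have h1 : μ (f ⁻¹' sᶜ) = μ (g ⁻¹' sᶜ) := by
    rw [← Measure.map_apply_of_aemeasurable h.aemeasurable_fst hs.compl,
        ← Measure.map_apply_of_aemeasurable h.aemeasurable_snd hs.compl, h.map_eq]
  have h2 : μ (g ⁻¹' sᶜ) = 0 := by
    have := ae_iff.1 hg
    convert this using 2
    rfl
  rw [ae_iff]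
  have : {ω | ¬ f ω ∈ s} = f ⁻¹' sᶜ := rfl
  rw [this, h1, h2]

lemma prob_ge_one_of_ae {Ω : Type*} [MeasurableSpace Ω] {μ : Measure Ω} [IsProbabilityMeasure μ]
    {s : Set Ω} (h : ∀ᵐ ω ∂μ, ω ∈ s) : 1 ≤ μ s := by
  have h0 : μ sᶜ = 0 := by rwa [ae_iff] at h
  calc (1:ENNReal) = μ Set.univ := measure_univ.symm
    _ = μ (s ∪ sᶜ) := by rw [Set.union_compl_self]
    _ ≤ μ s + μ sᶜ := measure_union_le _ _
    _ = μ s := by rw [h0, add_zero]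

lemma integrable_of_ae_bound' {Ω : Type*} [MeasurableSpace Ω] {μ : Measure Ω} [IsFiniteMeasure μ]
    {f : Ω → ℝ} (c : ℝ) (hf : AEStronglyMeasurable f μ) (h : ∀ᵐ ω ∂μ, |f ω| ≤ c) :
    Integrable f μ :=
  (integrable_const c).mono' hf (by simpa [Real.norm_eq_abs] using h)

lemma mean_zero_of_condexp {Ω : Type*} [MeasurableSpace Ω] {μ : Measure Ω} [IsProbabilityMeasure μ]
    {E : Type*} [MeasurableSpace E] {Vf : Ω → E} (hV : Measurable Vf)
    {e : Ω → ℝ} (he : Measurable e) {R c : ℝ}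
    (hebd : ∀ᵐ ω ∂μ, |e ω| ≤ R)
    (hcond : μ[e | MeasurableSpace.comap Vf inferInstance] =ᵐ[μ] 0)
    {f : E → ℝ} (hf : Measurable f) (hfbd : ∀ᵐ ω ∂μ, |f (Vf ω)| ≤ c) :
    ∫ ω, e ω * f (Vf ω) ∂μ = 0 := by
  have hm : MeasurableSpace.comap Vf inferInstance ≤ _ := hV.comap_le
  have hVm : Measurable[MeasurableSpace.comap Vf inferInstance] Vf := measurable_iff_comap_le.mpr le_rfl
  have hgm : StronglyMeasurable[MeasurableSpace.comap Vf inferInstance] (fun ω => f (Vf ω)) :=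
    Measurable.stronglyMeasurable (hf.comp hVm)
  have hint_e : Integrable e μ := integrable_of_ae_bound' R he.aestronglyMeasurable hebd
  have hint_prod : Integrable (fun ω => f (Vf ω) * e ω) μ := by
    refine integrable_of_ae_bound' (c * R) ((hf.comp hV).mul he).aestronglyMeasurable ?_
    filter_upwards [hebd, hfbd] with ω h1 h2
    rw [abs_mul]
    have h3 : 0 ≤ c := le_trans (abs_nonneg _) h2
    exact mul_le_mul h2 h1 (abs_nonneg _) h3
  have hint_prod' : Integrable ((fun ω => f (Vf ω)) * e) μ := hint_prod
  have key := condExp_mul_of_stronglyMeasurable_left hgm hint_prod' hint_e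
  have h0 : (fun ω => f (Vf ω)) * μ[e|MeasurableSpace.comap Vf inferInstance] =ᵐ[μ] 0 := by
    filter_upwards [hcond] with ω hω
    simp only [Pi.mul_apply, hω, Pi.zero_apply, mul_zero]
  calc ∫ ω, e ω * f (Vf ω) ∂μ = ∫ ω, ((fun ω => f (Vf ω)) * e) ω ∂μ := by
        congr 1; ext ω; simp [mul_comm]
    _ = ∫ ω, (μ[(fun ω => f (Vf ω)) * e|MeasurableSpace.comap Vf inferInstance]) ω ∂μ := (integral_condExp hm).symm
    _ = ∫ ω, ((fun ω => f (Vf ω)) * μ[e|MeasurableSpace.comap Vf inferInstance]) ω ∂μ := integral_congr_ae key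
    _ = ∫ ω, (0:Ω → ℝ) ω ∂μ := integral_congr_ae h0
    _ = 0 := by simp

end Aux

theorem martingale_noise_concentration
    {Ω : Type*} [MeasurableSpace Ω] (μ : Measure Ω) [IsProbabilityMeasure μ]
    {d K : ℕ} (hK : 1 ≤ K) (C₁ R : ℝ) (hC₁ : 0 < C₁) (hR : 0 ≤ R)
    (V : Fin K → Ω → Fin d → ℝ) (ε : Fin K → Ω → ℝ)
    (hVmeas : ∀ k, Measurable (V k)) (hεmeas : ∀ k, Measurable (ε k))
    (hindep : iIndepFun (fun k ω => (V k ω, ε k ω)) μ)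
    (hident : ∀ k, IdentDistrib (fun ω => (V k ω, ε k ω))
      (fun ω => (V ⟨0, hK⟩ ω, ε ⟨0, hK⟩ ω)) μ μ)
    (Sig : Matrix (Fin d) (Fin d) ℝ)
    (hSigdef : Sig = Matrix.of fun i j => ∫ ω, V ⟨0, hK⟩ ω i * V ⟨0, hK⟩ ω j ∂μ)
    (hSig : Sig.PosDef)
    (hVbound : ∀ᵐ ω ∂μ, V ⟨0, hK⟩ ω ⬝ᵥ (Sig⁻¹ *ᵥ V ⟨0, hK⟩ ω) ≤ C₁ * d)
    (hεbound : ∀ᵐ ω ∂μ, |ε ⟨0, hK⟩ ω| ≤ R)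
    (hcond : μ[ε ⟨0, hK⟩ | MeasurableSpace.comap (V ⟨0, hK⟩) inferInstance] =ᵐ[μ] 0) :
    ∀ δ : ℝ, 0 < δ → δ < 1 →
      ENNReal.ofReal (1 - δ) ≤
        μ {ω | euclNorm ((msqrt Sig)⁻¹ *ᵥ ((K : ℝ)⁻¹ • ∑ k, ε k ω • V k ω))
            ≤ Real.sqrt d * R *
              (Real.sqrt (2 * Real.log (8 * d / δ) / K)
                + 2 * Real.sqrt (C₁ * d) * Real.log (8 * d / δ) / K
                + (2 * C₁ * d / 3) * Real.log (8 * d / δ) ^ ((3 : ℝ) / 2)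
                    / (K : ℝ) ^ ((3 : ℝ) / 2))} := by
  classical
  intro δ hδ0 hδ1
  have hofr : ENNReal.ofReal (1 - δ) ≤ 1 := ENNReal.ofReal_le_one.2 (by linarith)
  by_cases hd0 : d = 0
  · subst hd0
    have hset : {ω | euclNorm ((msqrt Sig)⁻¹ *ᵥ ((K : ℝ)⁻¹ • ∑ k, ε k ω • V k ω))
            ≤ Real.sqrt (0:ℕ) * R *
              (Real.sqrt (2 * Real.log (8 * (0:ℕ) / δ) / K)
                + 2 * Real.sqrt (C₁ * (0:ℕ)) * Real.log (8 * (0:ℕ) / δ) / K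
                + (2 * C₁ * (0:ℕ) / 3) * Real.log (8 * (0:ℕ) / δ) ^ ((3 : ℝ) / 2)
                    / (K : ℝ) ^ ((3 : ℝ) / 2))} = Set.univ := by
      ext ω
      simp [euclNorm, Set.mem_setOf_eq]
    rw [hset, measure_univ]
    exact hofr
  -- d ≥ 1
  have hd1 : 1 ≤ d := Nat.one_le_iff_ne_zero.2 hd0
  have hdR : (1:ℝ) ≤ d := by exact_mod_cast hd1
  have hdpos : (0:ℝ) < d := by linarith
  have hKpos : (0:ℝ) < K := by exact_mod_cast hK
  set L : ℝ := Real.log (8*d/δ) with hLdef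
  have hL : 0 < L := Real.log_pos (by
    rw [lt_div_iff₀ hδ0]
    nlinarith)
  set A : Matrix (Fin d) (Fin d) ℝ := msqrt Sig with hAdef0
  have hAdef : A = (hSig.posSemidef.1.eigenvectorUnitary : Matrix (Fin d) (Fin d) ℝ) *
      diagonal (Real.sqrt ∘ hSig.posSemidef.1.eigenvalues) *
      (star hSig.posSemidef.1.eigenvectorUnitary : Matrix (Fin d) (Fin d) ℝ) := by
    rw [hAdef0, msqrt, dif_pos hSig.posSemidef]
  have hAps : A.PosSemidef := by
    rw [hAdef]
    exact (PosSemidef.diagonal (d := Real.sqrt ∘ hSig.posSemidef.1.eigenvalues)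
      (fun i => Real.sqrt_nonneg _)).mul_mul_conjTranspose_same _
  have hAsq : A * A = Sig := by
    rw [hAdef]
    have hU : (star hSig.posSemidef.1.eigenvectorUnitary : Matrix (Fin d) (Fin d) ℝ) *
        (hSig.posSemidef.1.eigenvectorUnitary : Matrix (Fin d) (Fin d) ℝ) = 1 :=
      Unitary.coe_star_mul_self _
    have hD : diagonal (Real.sqrt ∘ hSig.posSemidef.1.eigenvalues) *
        diagonal (Real.sqrt ∘ hSig.posSemidef.1.eigenvalues)
        = diagonal (RCLike.ofReal ∘ hSig.posSemidef.1.eigenvalues) := by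
      rw [diagonal_mul_diagonal]; congr 1; ext i
      simp [Real.mul_self_sqrt (hSig.posSemidef.eigenvalues_nonneg i)]
    conv_rhs => rw [hSig.posSemidef.1.spectral_theorem]
    rw [Unitary.conjStarAlgAut_apply, ← hD]
    simp only [Matrix.mul_assoc]
    rw [← Matrix.mul_assoc (star _ : Matrix (Fin d) (Fin d) ℝ) _, hU, Matrix.one_mul]
  have hAT : Aᵀ = A := by
    have h := hAps.isHermitian
    ext i j
    rw [Matrix.transpose_apply]
    exact congrFun (congrFun h j) i |>.symm ▸ (by
      have := Matrix.IsHermitian.apply h j i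
      simpa using this)
  have hdet : IsUnit A.det := by
    have h1 : A.det * A.det = Sig.det := by rw [← Matrix.det_mul, hAsq]
    have h2 : 0 < Sig.det := hSig.det_pos
    refine isUnit_iff_ne_zero.2 fun h => ?_
    rw [h, mul_zero] at h1
    exact h2.ne' h1.symm
  have hAinvA : A⁻¹ * A = 1 := Matrix.nonsing_inv_mul A hdet
  have hAAinv : A * A⁻¹ = 1 := Matrix.mul_nonsing_inv A hdet
  have hAinvT : A⁻¹ᵀ = A⁻¹ := by rw [Matrix.transpose_nonsing_inv, hAT]
  have hSiginv : Sig⁻¹ = A⁻¹ * A⁻¹ := by rw [← hAsq, Matrix.mul_inv_rev]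
  have hnorm_eq : ∀ v : Fin d → ℝ, (A⁻¹ *ᵥ v) ⬝ᵥ (A⁻¹ *ᵥ v) = v ⬝ᵥ (Sig⁻¹ *ᵥ v) := by
    intro v
    have h1 : ∀ u : Fin d → ℝ, u ᵥ* A⁻¹ = A⁻¹ *ᵥ u := fun u => by
      rw [← Matrix.mulVec_transpose, hAinvT]
    rw [hSiginv, ← Matrix.mulVec_mulVec, Matrix.dotProduct_mulVec, h1, dotProduct_comm]
  have hVk : ∀ (k : Fin K) j, Measurable (fun ω => V k ω j) :=
    fun k j => (measurable_pi_apply j).comp (hVmeas k)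
  have hmulVecMeas : ∀ (k : Fin K) (i : Fin d), Measurable (fun ω => (A⁻¹ *ᵥ V k ω) i) := by
    intro k i
    have heq : (fun ω => (A⁻¹ *ᵥ V k ω) i) = fun ω => ∑ j, A⁻¹ i j * V k ω j := by
      ext ω; simp [Matrix.mulVec, dotProduct]
    rw [heq]
    exact Finset.measurable_sum _ (fun j _ => (hVk k j).const_mul _)
  -- Case R = 0
  rcases eq_or_lt_of_le hR with hR0 | hRpos
  · have hε00 : ∀ᵐ ω ∂μ, ε ⟨0, hK⟩ ω = 0 := by
      filter_upwards [hεbound] with ω hω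
      rw [← hR0] at hω
      exact abs_eq_zero.1 (le_antisymm hω (abs_nonneg _))
    have hεk : ∀ k, ∀ᵐ ω ∂μ, ε k ω = 0 := by
      intro k
      have hid : IdentDistrib (ε k) (ε ⟨0, hK⟩) μ μ := (hident k).comp measurable_snd
      have := identDistrib_ae_mem hid (s := {x : ℝ | x = 0}) (measurableSet_singleton 0) hε00
      exact this
    have hall : ∀ᵐ ω ∂μ, ∀ k, ε k ω = 0 := ae_all_iff.2 hεk
    refine le_trans hofr (prob_ge_one_of_ae ?_)
    filter_upwards [hall] with ω hω
    have hz : ∑ k, ε k ω • V k ω = 0 := by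
      refine Finset.sum_eq_zero fun k _ => ?_
      rw [hω k, zero_smul]
    show euclNorm ((msqrt Sig)⁻¹ *ᵥ ((K : ℝ)⁻¹ • ∑ k, ε k ω • V k ω)) ≤ _
    rw [hz, smul_zero, Matrix.mulVec_zero]
    have h1 : euclNorm (0 : Fin d → ℝ) = 0 := by simp [euclNorm]
    rw [h1, ← hR0]
    simp
  -- Main case R > 0
  have hCd : (0:ℝ) < C₁ * d := by positivity
  set b : ℝ := R * Real.sqrt (C₁*d) with hbdef
  have hb : 0 < b := mul_pos hRpos (Real.sqrt_pos.2 hCd)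
  -- index 0 bound on components of A⁻¹ *ᵥ V
  have hY0bd : ∀ᵐ ω ∂μ, ∀ i, |(A⁻¹ *ᵥ V ⟨0, hK⟩ ω) i| ≤ Real.sqrt (C₁*d) := by
    filter_upwards [hVbound] with ω hω
    intro i
    have h1 : (A⁻¹ *ᵥ V ⟨0, hK⟩ ω) ⬝ᵥ (A⁻¹ *ᵥ V ⟨0, hK⟩ ω) ≤ C₁*d := by
      rw [hnorm_eq]; exact hω
    have h2 : (A⁻¹ *ᵥ V ⟨0, hK⟩ ω) i * (A⁻¹ *ᵥ V ⟨0, hK⟩ ω) i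
        ≤ (A⁻¹ *ᵥ V ⟨0, hK⟩ ω) ⬝ᵥ (A⁻¹ *ᵥ V ⟨0, hK⟩ ω) := by
      rw [dotProduct]
      exact Finset.single_le_sum (f := fun j => (A⁻¹ *ᵥ V ⟨0, hK⟩ ω) j * (A⁻¹ *ᵥ V ⟨0, hK⟩ ω) j)
        (fun j _ => mul_self_nonneg _) (Finset.mem_univ i)
    have h3 : |(A⁻¹ *ᵥ V ⟨0, hK⟩ ω) i|^2 ≤ C₁*d := by
      rw [sq_abs, sq]; linarith
    calc |(A⁻¹ *ᵥ V ⟨0, hK⟩ ω) i| = Real.sqrt (|(A⁻¹ *ᵥ V ⟨0, hK⟩ ω) i|^2) :=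
          (Real.sqrt_sq (abs_nonneg _)).symm
      _ ≤ Real.sqrt (C₁*d) := Real.sqrt_le_sqrt h3
  have hbd0 : ∀ i : Fin d, ∀ᵐ ω ∂μ, |ε ⟨0, hK⟩ ω * (A⁻¹ *ᵥ V ⟨0, hK⟩ ω) i| ≤ b := by
    intro i
    filter_upwards [hεbound, hY0bd] with ω h1 h2
    rw [abs_mul, hbdef]
    exact mul_le_mul h1 (h2 i) (abs_nonneg _) hR
  -- boundedness of V components for integrability
  have hV0bd : ∀ᵐ ω ∂μ, ∀ j, |V ⟨0, hK⟩ ω j| ≤ ∑ i, |A j i| * Real.sqrt (C₁*d) := by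
    filter_upwards [hY0bd] with ω hω
    intro j
    have hVeq : V ⟨0, hK⟩ ω = A *ᵥ (A⁻¹ *ᵥ V ⟨0, hK⟩ ω) := by
      rw [Matrix.mulVec_mulVec, hAAinv, Matrix.one_mulVec]
    have happ : V ⟨0, hK⟩ ω j = ∑ i, A j i * (A⁻¹ *ᵥ V ⟨0, hK⟩ ω) i := by
      conv_lhs => rw [hVeq]
      simp [Matrix.mulVec, dotProduct]
    rw [happ]
    calc |∑ i, A j i * (A⁻¹ *ᵥ V ⟨0, hK⟩ ω) i| ≤ ∑ i, |A j i * (A⁻¹ *ᵥ V ⟨0, hK⟩ ω) i| :=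
          Finset.abs_sum_le_sum_abs _ _
      _ ≤ ∑ i, |A j i| * Real.sqrt (C₁*d) := by
          refine Finset.sum_le_sum fun i _ => ?_
          rw [abs_mul]
          exact mul_le_mul_of_nonneg_left (hω i) (abs_nonneg _)
  have hVVint : ∀ j l, Integrable (fun ω => V ⟨0, hK⟩ ω j * V ⟨0, hK⟩ ω l) μ := by
    intro j l
    refine integrable_of_ae_bound'
      ((∑ i, |A j i| * Real.sqrt (C₁*d)) * (∑ i, |A l i| * Real.sqrt (C₁*d)))
      ((hVk _ j).mul (hVk _ l)).aestronglyMeasurable ?_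
    filter_upwards [hV0bd] with ω hω
    rw [abs_mul]
    exact mul_le_mul (hω j) (hω l) (abs_nonneg _) (le_trans (abs_nonneg _) (hω j))
  -- second moment of components of A⁻¹ *ᵥ V is 1
  have hg2int : ∀ i : Fin d, Integrable (fun ω => ((A⁻¹ *ᵥ V ⟨0, hK⟩ ω) i)^2) μ := by
    intro i
    refine integrable_of_ae_bound' (Real.sqrt (C₁*d)^2)
      ((hmulVecMeas _ i).pow_const 2).aestronglyMeasurable ?_
    filter_upwards [hY0bd] with ω hω
    rw [abs_pow]
    exact pow_le_pow_left₀ (abs_nonneg _) (hω i) 2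
  have hABA : A⁻¹ * Sig * A⁻¹ = 1 := by
    rw [← hAsq, ← Matrix.mul_assoc, Matrix.mul_assoc _ A A, ← Matrix.mul_assoc A⁻¹ A,
      hAinvA, Matrix.one_mul, hAAinv]
  have hg2 : ∀ i : Fin d, ∫ ω, ((A⁻¹ *ᵥ V ⟨0, hK⟩ ω) i)^2 ∂μ = 1 := by
    intro i
    have hexp : ∀ ω, ((A⁻¹ *ᵥ V ⟨0, hK⟩ ω) i)^2
        = ∑ j, ∑ l, (A⁻¹ i j * A⁻¹ i l) * (V ⟨0, hK⟩ ω j * V ⟨0, hK⟩ ω l) := by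
      intro ω
      have happ : (A⁻¹ *ᵥ V ⟨0, hK⟩ ω) i = ∑ j, A⁻¹ i j * V ⟨0, hK⟩ ω j := by
        simp [Matrix.mulVec, dotProduct]
      rw [happ, sq, Finset.sum_mul_sum]
      exact Finset.sum_congr rfl fun j _ => Finset.sum_congr rfl fun l _ => by ring
    calc ∫ ω, ((A⁻¹ *ᵥ V ⟨0, hK⟩ ω) i)^2 ∂μ
        = ∫ ω, ∑ j, ∑ l, (A⁻¹ i j * A⁻¹ i l) * (V ⟨0, hK⟩ ω j * V ⟨0, hK⟩ ω l) ∂μ := by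
          simp_rw [hexp]
      _ = ∑ j, ∑ l, (A⁻¹ i j * A⁻¹ i l) * ∫ ω, V ⟨0, hK⟩ ω j * V ⟨0, hK⟩ ω l ∂μ := by
          rw [integral_finset_sum _ (fun j _ =>
            integrable_finset_sum _ (fun l _ => (hVVint j l).const_mul _))]
          refine Finset.sum_congr rfl fun j _ => ?_
          rw [integral_finset_sum _ (fun l _ => (hVVint j l).const_mul _)]
          exact Finset.sum_congr rfl fun l _ => integral_const_mul _ _
      _ = ∑ j, ∑ l, (A⁻¹ i j * A⁻¹ i l) * Sig j l := by
          refine Finset.sum_congr rfl fun j _ => Finset.sum_congr rfl fun l _ => ?_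
          rw [hSigdef]
          rfl
      _ = (A⁻¹ * Sig * A⁻¹ᵀ) i i := by
          simp only [Matrix.mul_apply, Matrix.transpose_apply, Finset.sum_mul]
          rw [Finset.sum_comm]
          exact Finset.sum_congr rfl fun j _ => Finset.sum_congr rfl fun l _ => by ring
      _ = 1 := by rw [hAinvT, hABA, Matrix.one_apply_eq]
  -- mean zero at index 0
  have hfmeas : ∀ i : Fin d, Measurable (fun v : Fin d → ℝ => (A⁻¹ *ᵥ v) i) := by
    intro i
    have heq : (fun v : Fin d → ℝ => (A⁻¹ *ᵥ v) i) = fun v => ∑ j, A⁻¹ i j * v j := by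
      ext v; simp [Matrix.mulVec, dotProduct]
    rw [heq]
    exact Finset.measurable_sum _ (fun j _ => (measurable_pi_apply j).const_mul _)
  have hmean0 : ∀ i : Fin d, ∫ ω, ε ⟨0, hK⟩ ω * (A⁻¹ *ᵥ V ⟨0, hK⟩ ω) i ∂μ = 0 := by
    intro i
    refine mean_zero_of_condexp (hVmeas _) (hεmeas _) hεbound hcond (hfmeas i)
      (c := Real.sqrt (C₁*d)) ?_
    filter_upwards [hY0bd] with ω hω
    exact hω i
  -- variance bound at index 0
  have hvar0 : ∀ i : Fin d, ∫ ω, (ε ⟨0, hK⟩ ω * (A⁻¹ *ᵥ V ⟨0, hK⟩ ω) i)^2 ∂μ ≤ R^2 := by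
    intro i
    have hXsqint : Integrable (fun ω => (ε ⟨0, hK⟩ ω * (A⁻¹ *ᵥ V ⟨0, hK⟩ ω) i)^2) μ := by
      refine integrable_of_ae_bound' (b^2)
        (((hεmeas _).mul (hmulVecMeas _ i)).pow_const 2).aestronglyMeasurable ?_
      filter_upwards [hbd0 i] with ω hω
      rw [abs_pow]
      exact pow_le_pow_left₀ (abs_nonneg _) hω 2
    have hle : ∀ᵐ ω ∂μ, (ε ⟨0, hK⟩ ω * (A⁻¹ *ᵥ V ⟨0, hK⟩ ω) i)^2
        ≤ R^2 * ((A⁻¹ *ᵥ V ⟨0, hK⟩ ω) i)^2 := by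
      filter_upwards [hεbound] with ω h1
      have h2 : (ε ⟨0, hK⟩ ω)^2 ≤ R^2 := by
        rw [← sq_abs]
        exact pow_le_pow_left₀ (abs_nonneg _) h1 2
      nlinarith [sq_nonneg ((A⁻¹ *ᵥ V ⟨0, hK⟩ ω) i), sq_nonneg (ε ⟨0, hK⟩ ω)]
    have hmono := integral_mono_ae hXsqint ((hg2int i).const_mul (R^2)) hle
    rw [integral_const_mul, hg2 i, mul_one] at hmono
    exact hmono
  -- identically distributed / independent coordinates
  have hgmeas : ∀ i : Fin d, Measurable (fun p : (Fin d → ℝ) × ℝ => p.2 * (A⁻¹ *ᵥ p.1) i) :=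
    fun i => measurable_snd.mul ((hfmeas i).comp measurable_fst)
  have hXident : ∀ (i : Fin d) (k : Fin K),
      IdentDistrib (fun ω => ε k ω * (A⁻¹ *ᵥ V k ω) i)
        (fun ω => ε ⟨0, hK⟩ ω * (A⁻¹ *ᵥ V ⟨0, hK⟩ ω) i) μ μ :=
    fun i k => (hident k).comp (hgmeas i)
  have hXindep : ∀ i : Fin d,
      iIndepFun (fun k ω => ε k ω * (A⁻¹ *ᵥ V k ω) i) μ :=
    fun i => hindep.comp (fun _ p => p.2 * (A⁻¹ *ᵥ p.1) i) (fun _ => hgmeas i)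
  have hXmeas : ∀ (i : Fin d) (k : Fin K), Measurable (fun ω => ε k ω * (A⁻¹ *ᵥ V k ω) i) :=
    fun i k => (hεmeas k).mul (hmulVecMeas k i)
  -- transfer to all k
  have hbdk : ∀ (i : Fin d) (k : Fin K), ∀ᵐ ω ∂μ, |ε k ω * (A⁻¹ *ᵥ V k ω) i| ≤ b := by
    intro i k
    have hs : MeasurableSet {x : ℝ | |x| ≤ b} :=
      measurableSet_le (continuous_abs.measurable) measurable_const
    exact identDistrib_ae_mem (hXident i k) hs (hbd0 i)
  have hmeank : ∀ (i : Fin d) (k : Fin K), ∫ ω, ε k ω * (A⁻¹ *ᵥ V k ω) i ∂μ = 0 := by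
    intro i k
    rw [(hXident i k).integral_eq]
    exact hmean0 i
  have hvark : ∀ (i : Fin d) (k : Fin K), ∫ ω, (ε k ω * (A⁻¹ *ᵥ V k ω) i)^2 ∂μ ≤ R^2 := by
    intro i k
    have h2 := (hXident i k).comp (u := fun x : ℝ => x^2) (measurable_id.pow_const 2)
    calc ∫ ω, (ε k ω * (A⁻¹ *ᵥ V k ω) i)^2 ∂μ
        = ∫ ω, ((fun x : ℝ => x^2) ∘ (fun ω => ε k ω * (A⁻¹ *ᵥ V k ω) i)) ω ∂μ := rfl
      _ = ∫ ω, ((fun x : ℝ => x^2) ∘ (fun ω => ε ⟨0, hK⟩ ω * (A⁻¹ *ᵥ V ⟨0, hK⟩ ω) i)) ω ∂μ :=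
          h2.integral_eq
      _ = ∫ ω, (ε ⟨0, hK⟩ ω * (A⁻¹ *ᵥ V ⟨0, hK⟩ ω) i)^2 ∂μ := rfl
      _ ≤ R^2 := hvar0 i
  -- tail bounds
  have hKn : 0 < K := hK
  set t : ℝ := Real.sqrt (2*L*K)*R + 2/3*b*L with htdef
  have ht0 : 0 < t := by positivity
  have htail1 : ∀ i : Fin d,
      (μ {ω | t ≤ ∑ k, ε k ω * (A⁻¹ *ᵥ V k ω) i}).toReal ≤ Real.exp (-L) := by
    intro i
    exact bernstein_tail μ hKn (fun k ω => ε k ω * (A⁻¹ *ᵥ V k ω) i) (hXmeas i) (hXindep i)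
      hb hRpos hL (hbdk i) (hmeank i) (hvark i)
  have htail2 : ∀ i : Fin d,
      (μ {ω | t ≤ -∑ k, ε k ω * (A⁻¹ *ᵥ V k ω) i}).toReal ≤ Real.exp (-L) := by
    intro i
    have hnindep : iIndepFun
        (fun k ω => -(ε k ω * (A⁻¹ *ᵥ V k ω) i)) μ :=
      (hXindep i).comp (fun _ (x : ℝ) => -x) (fun _ => measurable_neg)
    have h := bernstein_tail μ hKn (fun k ω => -(ε k ω * (A⁻¹ *ᵥ V k ω) i))
      (fun k => (hXmeas i k).neg) hnindep hb hRpos hL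
      (fun k => by filter_upwards [hbdk i k] with ω hω; rwa [abs_neg])
      (fun k => by rw [integral_neg, hmeank i k, neg_zero])
      (fun k => by simp only [neg_sq]; exact hvark i k)
    have hseteq : {ω | t ≤ ∑ k, -(ε k ω * (A⁻¹ *ᵥ V k ω) i)}
        = {ω | t ≤ -∑ k, ε k ω * (A⁻¹ *ᵥ V k ω) i} := by
      ext ω
      rw [Set.mem_setOf_eq, Set.mem_setOf_eq, ← Finset.sum_neg_distrib]
    rwa [hseteq] at h
  have hexpL : Real.exp (-L) = δ/(8*d) := by
    rw [hLdef, Real.exp_neg, Real.exp_log (by positivity), inv_div]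
  -- good event
  have hSmeas : ∀ i : Fin d, Measurable (fun ω => ∑ k, ε k ω * (A⁻¹ *ᵥ V k ω) i) :=
    fun i => Finset.measurable_sum _ (fun k _ => hXmeas i k)
  have hGmeas : MeasurableSet {ω | ∀ i : Fin d, |∑ k, ε k ω * (A⁻¹ *ᵥ V k ω) i| ≤ t} := by
    have heq : {ω | ∀ i : Fin d, |∑ k, ε k ω * (A⁻¹ *ᵥ V k ω) i| ≤ t}
        = ⋂ i : Fin d, {ω | |∑ k, ε k ω * (A⁻¹ *ᵥ V k ω) i| ≤ t} := by
      ext ω; simp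
    rw [heq]
    exact MeasurableSet.iInter fun i =>
      measurableSet_le ((hSmeas i).abs) measurable_const
  have hcompl : μ {ω | ∀ i : Fin d, |∑ k, ε k ω * (A⁻¹ *ᵥ V k ω) i| ≤ t}ᶜ
      ≤ ENNReal.ofReal δ := by
    have hsub : {ω | ∀ i : Fin d, |∑ k, ε k ω * (A⁻¹ *ᵥ V k ω) i| ≤ t}ᶜ
        ⊆ ⋃ i : Fin d, ({ω | t ≤ ∑ k, ε k ω * (A⁻¹ *ᵥ V k ω) i}
          ∪ {ω | t ≤ -∑ k, ε k ω * (A⁻¹ *ᵥ V k ω) i}) := by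
      intro ω hω
      simp only [Set.mem_compl_iff, Set.mem_setOf_eq, not_forall, not_le] at hω
      obtain ⟨i, hi⟩ := hω
      refine Set.mem_iUnion.2 ⟨i, ?_⟩
      rcases abs_cases (∑ k, ε k ω * (A⁻¹ *ᵥ V k ω) i) with ⟨ha, _⟩ | ⟨ha, _⟩
      · left; rw [Set.mem_setOf_eq]; linarith
      · right; rw [Set.mem_setOf_eq]; linarith
    have hone : ∀ i : Fin d, μ ({ω | t ≤ ∑ k, ε k ω * (A⁻¹ *ᵥ V k ω) i}
        ∪ {ω | t ≤ -∑ k, ε k ω * (A⁻¹ *ᵥ V k ω) i}) ≤ ENNReal.ofReal (δ/(4*d)) := by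
      intro i
      have h1 : μ {ω | t ≤ ∑ k, ε k ω * (A⁻¹ *ᵥ V k ω) i} ≤ ENNReal.ofReal (δ/(8*d)) := by
        rw [ENNReal.le_ofReal_iff_toReal_le (measure_ne_top μ _) (by positivity)]
        rw [← hexpL]; exact htail1 i
      have h2 : μ {ω | t ≤ -∑ k, ε k ω * (A⁻¹ *ᵥ V k ω) i} ≤ ENNReal.ofReal (δ/(8*d)) := by
        rw [ENNReal.le_ofReal_iff_toReal_le (measure_ne_top μ _) (by positivity)]
        rw [← hexpL]; exact htail2 i
      calc μ _ ≤ μ {ω | t ≤ ∑ k, ε k ω * (A⁻¹ *ᵥ V k ω) i}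
            + μ {ω | t ≤ -∑ k, ε k ω * (A⁻¹ *ᵥ V k ω) i} := measure_union_le _ _
        _ ≤ ENNReal.ofReal (δ/(8*d)) + ENNReal.ofReal (δ/(8*d)) := add_le_add h1 h2
        _ = ENNReal.ofReal (δ/(4*d)) := by
            rw [← ENNReal.ofReal_add (by positivity) (by positivity)]
            congr 1
            field_simp
            ring
    calc μ _ ≤ μ (⋃ i : Fin d, ({ω | t ≤ ∑ k, ε k ω * (A⁻¹ *ᵥ V k ω) i}
          ∪ {ω | t ≤ -∑ k, ε k ω * (A⁻¹ *ᵥ V k ω) i})) := measure_mono hsub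
      _ ≤ ∑ i : Fin d, μ ({ω | t ≤ ∑ k, ε k ω * (A⁻¹ *ᵥ V k ω) i}
          ∪ {ω | t ≤ -∑ k, ε k ω * (A⁻¹ *ᵥ V k ω) i}) := measure_iUnion_fintype_le _ _
      _ ≤ ∑ _i : Fin d, ENNReal.ofReal (δ/(4*d)) := Finset.sum_le_sum (fun i _ => hone i)
      _ = (d : ENNReal) * ENNReal.ofReal (δ/(4*d)) := by
          rw [Finset.sum_const, Finset.card_univ, Fintype.card_fin, nsmul_eq_mul]
      _ = ENNReal.ofReal (d * (δ/(4*d))) := by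
          rw [ENNReal.ofReal_mul (by positivity)]
          congr 1
          exact (ENNReal.ofReal_natCast d).symm
      _ ≤ ENNReal.ofReal δ := by
          refine ENNReal.ofReal_le_ofReal ?_
          rw [show (d:ℝ) * (δ/(4*d)) = δ/4 by field_simp]
          linarith
  -- good event is contained in target event
  have hsqrtKey : Real.sqrt (2*L/K) = Real.sqrt (2*L*K)/K := by
    rw [show 2*L/(K:ℝ) = (2*L*K)/(K:ℝ)^2 by field_simp,
      Real.sqrt_div (by positivity), Real.sqrt_sq hKpos.le]
  have htK : t/K ≤ R * (Real.sqrt (2 * L / K)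
      + 2 * Real.sqrt (C₁ * d) * L / K
      + (2 * C₁ * d / 3) * L ^ ((3 : ℝ) / 2) / (K : ℝ) ^ ((3 : ℝ) / 2)) := by
    have he3 : 0 ≤ (2 * C₁ * d / 3) * L ^ ((3 : ℝ) / 2) / (K : ℝ) ^ ((3 : ℝ) / 2) := by
      positivity
    have h1 : t/K = R * (Real.sqrt (2*L/K)) + 2/3 * (R * Real.sqrt (C₁*d)) * L / K := by
      rw [htdef, hsqrtKey, hbdef]
      field_simp
    have hq : 0 ≤ R * Real.sqrt (C₁*d) * L / K := by positivity
    have hR3 : 0 ≤ R * ((2 * C₁ * d / 3) * L ^ ((3:ℝ)/2) / (K:ℝ) ^ ((3:ℝ)/2)) := by positivity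
    have expand : R * (Real.sqrt (2 * L / K) + 2 * Real.sqrt (C₁ * d) * L / K
          + (2 * C₁ * d / 3) * L ^ ((3 : ℝ) / 2) / (K : ℝ) ^ ((3 : ℝ) / 2))
        = R * Real.sqrt (2*L/K) + R * (2 * Real.sqrt (C₁*d) * L / K)
          + R * ((2 * C₁ * d / 3) * L ^ ((3:ℝ)/2) / (K:ℝ) ^ ((3:ℝ)/2)) := by ring
    have h4 : R * (2 * Real.sqrt (C₁ * d) * L / K) - 2/3 * (R * Real.sqrt (C₁*d)) * L / K
        = (4/3) * (R * Real.sqrt (C₁*d) * L / K) := by ring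
    rw [h1, expand]
    linarith
  have hGsub : {ω | ∀ i : Fin d, |∑ k, ε k ω * (A⁻¹ *ᵥ V k ω) i| ≤ t}
      ⊆ {ω | euclNorm ((msqrt Sig)⁻¹ *ᵥ ((K : ℝ)⁻¹ • ∑ k, ε k ω • V k ω))
            ≤ Real.sqrt d * R *
              (Real.sqrt (2 * Real.log (8 * d / δ) / K)
                + 2 * Real.sqrt (C₁ * d) * Real.log (8 * d / δ) / K
                + (2 * C₁ * d / 3) * Real.log (8 * d / δ) ^ ((3 : ℝ) / 2)
                    / (K : ℝ) ^ ((3 : ℝ) / 2))} := by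
    intro ω hω
    rw [Set.mem_setOf_eq] at hω ⊢
    have hw : ∀ i : Fin d, (A⁻¹ *ᵥ ((K : ℝ)⁻¹ • ∑ k, ε k ω • V k ω)) i
        = (K:ℝ)⁻¹ * ∑ k, ε k ω * (A⁻¹ *ᵥ V k ω) i := by
      intro i
      rw [Matrix.mulVec_smul, Pi.smul_apply, smul_eq_mul]
      congr 1
      simp only [Matrix.mulVec, dotProduct, Finset.sum_apply, Pi.smul_apply, smul_eq_mul,
        Finset.mul_sum]
      rw [Finset.sum_comm]
      exact Finset.sum_congr rfl fun k _ => Finset.sum_congr rfl fun j _ => by ring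
    have hwb : ∀ i : Fin d, ((A⁻¹ *ᵥ ((K : ℝ)⁻¹ • ∑ k, ε k ω • V k ω)) i)^2 ≤ (t/K)^2 := by
      intro i
      rw [hw i]
      have habs : |(K:ℝ)⁻¹ * ∑ k, ε k ω * (A⁻¹ *ᵥ V k ω) i| ≤ t/K := by
        rw [abs_mul, abs_of_pos (inv_pos.2 hKpos), inv_mul_eq_div, div_le_div_iff₀ hKpos hKpos]
        exact mul_le_mul_of_nonneg_right (hω i) hKpos.le
      calc ((K:ℝ)⁻¹ * ∑ k, ε k ω * (A⁻¹ *ᵥ V k ω) i)^2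
          = |(K:ℝ)⁻¹ * ∑ k, ε k ω * (A⁻¹ *ᵥ V k ω) i|^2 := (sq_abs _).symm
        _ ≤ (t/K)^2 := pow_le_pow_left₀ (abs_nonneg _) habs 2
    have hnorm : euclNorm ((msqrt Sig)⁻¹ *ᵥ ((K : ℝ)⁻¹ • ∑ k, ε k ω • V k ω))
        ≤ Real.sqrt d * (t/K) := by
      rw [euclNorm]
      have hsum : ∑ i, ((A⁻¹ *ᵥ ((K : ℝ)⁻¹ • ∑ k, ε k ω • V k ω)) i)^2
          ≤ ∑ _i : Fin d, (t/K)^2 := Finset.sum_le_sum fun i _ => hwb i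
      calc Real.sqrt (∑ i, (((msqrt Sig)⁻¹ *ᵥ ((K : ℝ)⁻¹ • ∑ k, ε k ω • V k ω)) i)^2)
          ≤ Real.sqrt (∑ _i : Fin d, (t/K)^2) := Real.sqrt_le_sqrt hsum
        _ = Real.sqrt (d * (t/K)^2) := by
            rw [Finset.sum_const, Finset.card_univ, Fintype.card_fin, nsmul_eq_mul]
        _ = Real.sqrt d * (t/K) := by
            rw [Real.sqrt_mul (by positivity), Real.sqrt_sq (by positivity)]
    refine le_trans hnorm ?_
    rw [mul_assoc]
    exact mul_le_mul_of_nonneg_left htK (Real.sqrt_nonneg _)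
  -- conclude
  have hG1 : μ {ω | ∀ i : Fin d, |∑ k, ε k ω * (A⁻¹ *ᵥ V k ω) i| ≤ t}
      = 1 - μ ({ω | ∀ i : Fin d, |∑ k, ε k ω * (A⁻¹ *ᵥ V k ω) i| ≤ t}ᶜ) := by
    rw [measure_compl hGmeas (measure_ne_top μ _), measure_univ,
      ENNReal.sub_sub_cancel ENNReal.one_ne_top prob_le_one]
  calc ENNReal.ofReal (1 - δ) = 1 - ENNReal.ofReal δ := by
        rw [← ENNReal.ofReal_one, ← ENNReal.ofReal_sub _ hδ0.le]
    _ ≤ 1 - μ ({ω | ∀ i : Fin d, |∑ k, ε k ω * (A⁻¹ *ᵥ V k ω) i| ≤ t}ᶜ) :=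
        tsub_le_tsub_left hcompl 1
    _ = μ {ω | ∀ i : Fin d, |∑ k, ε k ω * (A⁻¹ *ᵥ V k ω) i| ≤ t} := hG1.symm
    _ ≤ _ := measure_mono hGsub
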